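/- Let K ⊂ ℝⁿ be an open bounded convex set. There exists a unique point x ∈ K minimizing the volume of the dual body K^x = {f ∈ (ℝⁿ)* : f(y−x) > −1 ∀ y ∈ closure(K)} (the Santaló point of K). -/

import Mathlib

open MeasureTheory

open Set Filter Topology Real
open scoped ENNReal Pointwise

namespace Stmt17

variable {n : ℕ}

/-- dot product -/
noncomputable def dot (g y : Fin n → ℝ) : ℝ := ∑ i, g i * y i

lemma dot_add_right (g y z : Fin n → ℝ) : dot g (y + z) = dot g y + dot g z := by
  simp [dot, mul_add, Finset.sum_add_distrib]

lemma dot_sub_right (g y z : Fin n → ℝ) : dot g (y - z) = dot g y - dot g z := by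
  simp [dot, mul_sub, Finset.sum_sub_distrib]

lemma dot_add_left (g h y : Fin n → ℝ) : dot (g + h) y = dot g y + dot h y := by
  simp [dot, add_mul, Finset.sum_add_distrib]

lemma dot_sub_left (g h y : Fin n → ℝ) : dot (g - h) y = dot g y - dot h y := by
  simp [dot, sub_mul, Finset.sum_sub_distrib]

lemma dot_smul_left (c : ℝ) (g y : Fin n → ℝ) : dot (c • g) y = c * dot g y := by
  simp [dot, Finset.mul_sum, mul_assoc]

lemma dot_smul_right (c : ℝ) (g y : Fin n → ℝ) : dot g (c • y) = c * dot g y := by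
  simp [dot, Finset.mul_sum]; ring_nf
  exact Finset.sum_congr rfl fun i _ => by ring

lemma dot_comm (g y : Fin n → ℝ) : dot g y = dot y g := by
  simp [dot, mul_comm]

lemma continuous_dot_left (y : Fin n → ℝ) : Continuous (fun g : Fin n → ℝ => dot g y) := by
  unfold dot
  exact continuous_finset_sum _ fun i _ => ((continuous_apply i).mul continuous_const)

lemma continuous_dot_right (g : Fin n → ℝ) : Continuous (fun y : Fin n → ℝ => dot g y) := by
  unfold dot
  exact continuous_finset_sum _ fun i _ => (continuous_const.mul (continuous_apply i))

lemma abs_dot_le (g y : Fin n → ℝ) {M : ℝ} (hy : ∀ i, |y i| ≤ M) :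
    |dot g y| ≤ (n * M) * ‖g‖ := by
  calc |dot g y| ≤ ∑ i, |g i * y i| := Finset.abs_sum_le_sum_abs _ _
    _ ≤ ∑ _i : Fin n, ‖g‖ * M := by
        refine Finset.sum_le_sum fun i _ => ?_
        rw [abs_mul]
        have h1 : |g i| ≤ ‖g‖ := by
          simpa using norm_le_pi_norm g i
        have h2 : |y i| ≤ M := hy i
        have := abs_nonneg (g i)
        have := abs_nonneg (y i)
        nlinarith [norm_nonneg g]
    _ = (n * M) * ‖g‖ := by simp [Finset.sum_const]; ring

/-- support function of closure K -/
noncomputable def hh (K : Set (Fin n → ℝ)) (g : Fin n → ℝ) : ℝ :=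
  sSup ((fun y => dot g y) '' closure K)

variable {K : Set (Fin n → ℝ)}

lemma hcompact (hKbdd : Bornology.IsBounded K) : IsCompact (closure K) :=
  Metric.isCompact_of_isClosed_isBounded isClosed_closure hKbdd.closure

lemma hh_attained (hKbdd : Bornology.IsBounded K) (hKne : K.Nonempty) (g : Fin n → ℝ) :
    ∃ y ∈ closure K, (hh K g = dot g y ∧ ∀ z ∈ closure K, dot g z ≤ dot g y) := by
  have hcomp := hcompact hKbdd
  have hne : (closure K).Nonempty := hKne.closure
  have hcont : ContinuousOn (fun y => dot g y) (closure K) := by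
    refine Continuous.continuousOn ?_
    unfold dot
    exact continuous_finset_sum _ fun i _ => (continuous_const.mul (continuous_apply i))
  obtain ⟨y, hyK, hy⟩ := hcomp.exists_isMaxOn hne hcont
  refine ⟨y, hyK, ?_, fun z hz => hy hz⟩
  have : IsGreatest ((fun y => dot g y) '' closure K) (dot g y) :=
    ⟨⟨y, hyK, rfl⟩, fun a ⟨z, hz, hza⟩ => hza ▸ hy hz⟩
  exact this.csSup_eq.symm ▸ rfl

lemma le_hh (hKbdd : Bornology.IsBounded K) (hKne : K.Nonempty) {y : Fin n → ℝ}
    (hy : y ∈ closure K) (g : Fin n → ℝ) : dot g y ≤ hh K g := by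
  obtain ⟨z, hzK, hz, hmax⟩ := hh_attained hKbdd hKne g
  rw [hz]
  exact hmax y hy

noncomputable def hx (K : Set (Fin n → ℝ)) (x g : Fin n → ℝ) : ℝ := hh K g - dot g x

lemma hx_nonneg (hKbdd : Bornology.IsBounded K) (hKne : K.Nonempty) {x : Fin n → ℝ}
    (hxK : x ∈ closure K) (g : Fin n → ℝ) : 0 ≤ hx K x g :=
  sub_nonneg.2 (le_hh hKbdd hKne hxK g)

lemma hx_smul (hKbdd : Bornology.IsBounded K) (hKne : K.Nonempty) (x : Fin n → ℝ)
    {c : ℝ} (hc : 0 ≤ c) (g : Fin n → ℝ) : hx K x (c • g) = c * hx K x g := by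
  have hsmul : hh K (c • g) = c * hh K g := by
    obtain ⟨y, hyK, hy, hmax⟩ := hh_attained hKbdd hKne g
    have : IsGreatest ((fun z => dot (c • g) z) '' closure K) (c * dot g y) := by
      constructor
      · exact ⟨y, hyK, by simp only []; rw [dot_smul_left]⟩
      · rintro a ⟨z, hz, rfl⟩
        simp only []
        rw [dot_smul_left]
        exact mul_le_mul_of_nonneg_left (hmax z hz) hc
    rw [show hh K (c • g) = c * dot g y from this.csSup_eq.symm ▸ rfl, hy]
  simp only [hx, hsmul, dot_smul_left]
  ring

/-- bound on elements of closure K -/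
lemma exists_bound (hKbdd : Bornology.IsBounded K) :
    ∃ M : ℝ, 0 ≤ M ∧ ∀ y ∈ closure K, ∀ i, |y i| ≤ M := by
  obtain ⟨r, hr⟩ := hKbdd.closure.subset_closedBall 0
  refine ⟨max r 0, le_max_right _ _, fun y hy i => ?_⟩
  have := hr hy
  simp only [Metric.mem_closedBall, dist_zero_right] at this
  have h1 : |y i| ≤ ‖y‖ := by simpa using norm_le_pi_norm y i
  exact h1.trans (this.trans (le_max_left _ _))

lemma hx_continuous (hKbdd : Bornology.IsBounded K) (hKne : K.Nonempty) (x : Fin n → ℝ) :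
    Continuous (hx K x) := by
  obtain ⟨M, hM0, hM⟩ := exists_bound hKbdd
  have key : ∀ g g' : Fin n → ℝ, hh K g - hh K g' ≤ (n * M) * ‖g - g'‖ := by
    intro g g'
    obtain ⟨y, hyK, hy, _⟩ := hh_attained hKbdd hKne g
    have h1 : dot g' y ≤ hh K g' := le_hh hKbdd hKne hyK g'
    have h2 : dot g y - dot g' y ≤ (n * M) * ‖g - g'‖ := by
      rw [← dot_sub_left]
      exact (le_abs_self _).trans (abs_dot_le _ _ (hM y hyK))
    rw [hy]; linarith
  have hlip : LipschitzWith (Real.toNNReal (n * M)) (hh K) := by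
    refine LipschitzWith.of_dist_le_mul fun g g' => ?_
    rw [Real.dist_eq, abs_sub_le_iff]
    have c : (Real.toNNReal (n*M) : ℝ) = n * M := by
      rw [Real.coe_toNNReal]; positivity
    rw [c]
    constructor
    · simpa [dist_eq_norm] using key g g'
    · have := key g' g
      rw [norm_sub_rev] at this
      simpa [dist_eq_norm] using this
  exact hlip.continuous.sub (continuous_dot_left x)

noncomputable def cgam (n : ℕ) : ℝ≥0∞ := ∫⁻ s in Ioi (0:ℝ), ENNReal.ofReal (s ^ n * Real.exp (-s))

lemma cgam_lt_top (n : ℕ) : cgam n < ⊤ := by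
  have h := Real.GammaIntegral_convergent (s := (n+1:ℝ)) (by positivity)
  have h2 : IntegrableOn (fun s : ℝ => s ^ n * Real.exp (-s)) (Ioi 0) := by
    refine (h.congr_fun ?_ measurableSet_Ioi)
    intro s hs
    simp only [add_sub_cancel_right, Real.rpow_natCast]
    ring
  have := h2.lintegral_lt_top
  unfold cgam
  convert this using 1

lemma cgam_pos (n : ℕ) : 0 < cgam n := by
  have hsub : (Ioo (1:ℝ) 2) ⊆ Ioi 0 := fun s hs => lt_trans one_pos hs.1
  have h1 : ENNReal.ofReal (Real.exp (-2)) * volume (Ioo (1:ℝ) 2) ≤ cgam n := by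
    rw [← setLIntegral_const (Ioo (1:ℝ) 2) (ENNReal.ofReal (Real.exp (-2)))]
    refine le_trans (setLIntegral_mono (by fun_prop) ?_) (lintegral_mono_set hsub)
    intro s hs
    refine ENNReal.ofReal_le_ofReal ?_
    have h1 : (1:ℝ) ≤ s ^ n := one_le_pow₀ hs.1.le
    have h2 : Real.exp (-2) ≤ Real.exp (-s) := Real.exp_le_exp.2 (by linarith [hs.2])
    nlinarith [Real.exp_pos (-s)]
  refine lt_of_lt_of_le ?_ h1
  rw [Real.volume_Ioo]
  apply ENNReal.mul_pos
  · simp [Real.exp_pos]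
  · norm_num

noncomputable def VV (K : Set (Fin n → ℝ)) (x : Fin n → ℝ) : ℝ≥0∞ :=
  volume {g : Fin n → ℝ | hx K x g < 1}

noncomputable def FF (K : Set (Fin n → ℝ)) (x : Fin n → ℝ) : ℝ≥0∞ :=
  ∫⁻ g : Fin n → ℝ, ENNReal.ofReal (Real.exp (-(hx K x g)))

/-- scaling: volume of sublevel sets -/
lemma vol_sublevel (hKbdd : Bornology.IsBounded K) (hKne : K.Nonempty)
    {x : Fin n → ℝ} (hxK : x ∈ closure K) {s : ℝ} (hs : 0 < s) :
    volume {g : Fin n → ℝ | hx K x g < s} = ENNReal.ofReal (s ^ n) * VV K x := by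
  have hset : {g : Fin n → ℝ | hx K x g < s} = s • {g : Fin n → ℝ | hx K x g < 1} := by
    ext g
    rw [Set.mem_smul_set_iff_inv_smul_mem₀ (ne_of_gt hs)]
    simp only [Set.mem_setOf_eq]
    rw [hx_smul hKbdd hKne x (by positivity) g]
    rw [inv_mul_lt_iff₀ hs, mul_one]
  rw [hset, Measure.addHaar_smul_of_nonneg volume hs.le, Module.finrank_fin_fun, VV]

/-- Main identity : FF = cgam * VV -/
lemma FF_eq (hKbdd : Bornology.IsBounded K) (hKne : K.Nonempty)
    {x : Fin n → ℝ} (hxK : x ∈ closure K) : FF K x = cgam n * VV K x := by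
  set h := hx K x with hdef
  have hcont : Continuous h := hx_continuous hKbdd hKne x
  have h0 : ∀ g, 0 ≤ h g := hx_nonneg hKbdd hKne hxK
  set G : (Fin n → ℝ) → ℝ → ℝ≥0∞ := fun g s =>
    Set.indicator {p : (Fin n → ℝ) × ℝ | h p.1 < p.2} (fun p => ENNReal.ofReal (Real.exp (-p.2))) (g, s)
    with hG
  have hGmeas : Measurable (Function.uncurry G) := by
    have hopen : IsOpen {p : (Fin n → ℝ) × ℝ | h p.1 < p.2} :=
      isOpen_lt (hcont.comp continuous_fst) continuous_snd
    exact Measurable.indicator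
      (by fun_prop) hopen.measurableSet
  -- step 1 : inner integral in s
  have step1 : ∀ g, (∫⁻ s in Ioi (0:ℝ), G g s) = ENNReal.ofReal (Real.exp (-(h g))) := by
    intro g
    have e1 : ∀ s : ℝ, G g s = Set.indicator (Ioi (h g)) (fun s => ENNReal.ofReal (Real.exp (-s))) s := by
      intro s
      by_cases hc : h g < s
      · rw [hG]; simp only []
        rw [Set.indicator_of_mem (by exact hc), Set.indicator_of_mem (by exact hc)]
      · rw [hG]; simp only []
        rw [Set.indicator_of_notMem (by exact hc), Set.indicator_of_notMem (by exact hc)]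
    simp_rw [e1]
    rw [lintegral_indicator measurableSet_Ioi, Measure.restrict_restrict measurableSet_Ioi]
    rw [Set.inter_eq_self_of_subset_left (Ioi_subset_Ioi (h0 g))]
    rw [← ofReal_integral_eq_lintegral_ofReal]
    · rw [integral_exp_neg_Ioi]
    · have := exp_neg_integrableOn_Ioi (h g) (one_pos)
      refine this.congr_fun ?_ measurableSet_Ioi
      intro s _; norm_num
    · filter_upwards with s using (Real.exp_pos _).le
  -- step 2 : swap
  have step2 : (∫⁻ g : Fin n → ℝ, ∫⁻ s in Ioi (0:ℝ), G g s) =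
      ∫⁻ s in Ioi (0:ℝ), ∫⁻ g : Fin n → ℝ, G g s :=
    lintegral_lintegral_swap hGmeas.aemeasurable
  -- step 3+4 : outer integral
  have step3 : ∀ s ∈ Ioi (0:ℝ), (∫⁻ g : Fin n → ℝ, G g s)
      = ENNReal.ofReal (s ^ n * Real.exp (-s)) * VV K x := by
    intro s hs
    have e2 : ∀ g : Fin n → ℝ, G g s =
        Set.indicator {g : Fin n → ℝ | h g < s} (fun _ => ENNReal.ofReal (Real.exp (-s))) g := by
      intro g
      by_cases hc : h g < s
      · rw [hG]; simp only []
        rw [Set.indicator_of_mem (by exact hc), Set.indicator_of_mem (by exact hc)]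
      · rw [hG]; simp only []
        rw [Set.indicator_of_notMem (by exact hc), Set.indicator_of_notMem (by exact hc)]
    simp_rw [e2]
    have hms : MeasurableSet {g : Fin n → ℝ | h g < s} :=
      (isOpen_lt hcont continuous_const).measurableSet
    rw [lintegral_indicator hms, setLIntegral_const]
    rw [vol_sublevel hKbdd hKne hxK hs]
    rw [← mul_assoc, ← ENNReal.ofReal_mul (Real.exp_pos _).le, mul_comm (Real.exp (-s)) (s ^ n)]
  have main : FF K x = ∫⁻ s in Ioi (0:ℝ), ENNReal.ofReal (s ^ n * Real.exp (-s)) * VV K x := by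
    rw [FF]
    simp_rw [hdef ▸ (fun g => (step1 g).symm : ∀ g, ENNReal.ofReal (Real.exp (-(hx K x g))) = _)]
    rw [step2]
    exact setLIntegral_congr_fun measurableSet_Ioi (fun s hs => step3 s hs)
  rw [main, lintegral_mul_const _ (by fun_prop), cgam]

/-- key pointwise lower bound for interior points -/
lemma hx_lower (hKbdd : Bornology.IsBounded K) (hKne : K.Nonempty) {x : Fin n → ℝ}
    (hxK : x ∈ K) (hKopen : IsOpen K) :
    ∃ r : ℝ, 0 < r ∧ ∀ g : Fin n → ℝ, ∀ i, r * |g i| ≤ hx K x g := by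
  obtain ⟨ε, hε, hball⟩ := Metric.isOpen_iff.1 hKopen x hxK
  refine ⟨ε/2, by positivity, fun g i => ?_⟩
  set c : ℝ := ε/2 * (if 0 ≤ g i then 1 else -1) with hc
  have habsc : |c| = ε/2 := by
    rw [hc, abs_mul]
    split <;> simp [abs_of_pos, hε, abs_of_nonneg, le_of_lt hε]
  set y : Fin n → ℝ := Function.update x i (x i + c) with hy
  have hymem : y ∈ closure K := by
    refine subset_closure (hball ?_)
    rw [Metric.mem_ball, dist_eq_norm]
    have hnorm : ∀ j, |(y - x) j| ≤ ε/2 := by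
      intro j
      by_cases hij : j = i
      · subst hij
        simp [hy, Function.update_self, habsc]
      · simp only [hy, Pi.sub_apply, Function.update_of_ne hij, sub_self, abs_zero]
        positivity
    have hle : ‖y - x‖ ≤ ε/2 := (pi_norm_le_iff_of_nonneg (by positivity)).2
      (fun j => by rw [Real.norm_eq_abs]; exact hnorm j)
    linarith
  have hdot : dot g y - dot g x = ε/2 * |g i| := by
    have h1 : dot g y - dot g x = ∑ j, g j * (y j - x j) := by
      simp [dot, mul_sub, Finset.sum_sub_distrib]
    have h2' : (∑ j, g j * (y j - x j)) = g i * (y i - x i) := by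
      refine Finset.sum_eq_single i (fun j _ hij => ?_) (fun hni => absurd (Finset.mem_univ i) hni)
      simp only [hy, Function.update_of_ne hij, sub_self, mul_zero]
    have h2 : (∑ j, g j * (y j - x j)) = g i * c := by
      rw [h2']
      simp [hy]
    have h3 : g i * c = ε/2 * |g i| := by
      rw [hc]
      split <;> rename_i hsign
      · rw [abs_of_nonneg hsign]; ring
      · rw [abs_of_neg (not_le.1 hsign)]; ring
    rw [h1, h2, h3]
  have := le_hh hKbdd hKne hymem g
  unfold hx
  linarith [hdot]

lemma VV_lt_top (hKbdd : Bornology.IsBounded K) (hKne : K.Nonempty) {x : Fin n → ℝ}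
    (hxK : x ∈ K) (hKopen : IsOpen K) : VV K x < ⊤ := by
  obtain ⟨r, hr, hbound⟩ := hx_lower hKbdd hKne hxK hKopen
  have hsub : {g : Fin n → ℝ | hx K x g < 1} ⊆ Metric.closedBall 0 r⁻¹ := by
    intro g hg
    simp only [Set.mem_setOf_eq] at hg
    rw [Metric.mem_closedBall, dist_zero_right]
    refine (pi_norm_le_iff_of_nonneg (by positivity)).2 fun i => ?_
    have h1 := hbound g i
    rw [Real.norm_eq_abs]
    nlinarith [abs_nonneg (g i), mul_inv_cancel₀ (ne_of_gt hr)]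
  refine lt_of_le_of_lt (measure_mono hsub) measure_closedBall_lt_top

/-- identification of the dual body volume -/
lemma dual_eq (hKbdd : Bornology.IsBounded K) (hKne : K.Nonempty)
    (x : Fin n → ℝ)
    (dual : (Fin n → ℝ) → Set (Fin n → ℝ))
    (hdual : ∀ x, dual x = {f | ∀ y ∈ closure K, -1 < ∑ i, f i * (y i - x i)}) :
    volume (dual x) = VV K x := by
  have hmem : ∀ f : Fin n → ℝ, f ∈ dual x ↔ hx K x (-f) < 1 := by
    intro f
    rw [hdual]
    simp only [Set.mem_setOf_eq]
    have hrw : ∀ y : Fin n → ℝ, (∑ i, f i * (y i - x i)) = -(dot (-f) y - dot (-f) x) := by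
      intro y
      simp only [dot, Pi.neg_apply, neg_mul, Finset.sum_neg_distrib, mul_sub]
      rw [Finset.sum_sub_distrib]
      ring
    constructor
    · intro hf
      obtain ⟨y, hyK, hy, _⟩ := hh_attained hKbdd hKne (-f)
      unfold hx
      rw [hy]
      have := hf y hyK
      rw [hrw y] at this
      linarith
    · intro hf y hyK
      have h1 : dot (-f) y ≤ hh K (-f) := le_hh hKbdd hKne hyK (-f)
      rw [hrw y]
      unfold hx at hf
      linarith
  have hset : dual x = (-1 : ℝ) • {g : Fin n → ℝ | hx K x g < 1} := by
    ext f
    rw [Set.mem_smul_set_iff_inv_smul_mem₀ (by norm_num : (-1:ℝ) ≠ 0)]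
    simp only [Set.mem_setOf_eq]
    rw [hmem f]
    norm_num
  rw [hset, Measure.addHaar_smul volume, VV]
  norm_num

/-- Euclidean norm -/
noncomputable def e2 (w : Fin n → ℝ) : ℝ := Real.sqrt (∑ i, w i ^ 2)

lemma e2_nonneg (w : Fin n → ℝ) : 0 ≤ e2 w := Real.sqrt_nonneg _

lemma e2_sq (w : Fin n → ℝ) : e2 w ^ 2 = ∑ i, w i ^ 2 :=
  Real.sq_sqrt (Finset.sum_nonneg fun i _ => sq_nonneg _)

lemma abs_dot_le_e2 (w z : Fin n → ℝ) : |dot w z| ≤ e2 w * e2 z := by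
  have h := Finset.sum_mul_sq_le_sq_mul_sq Finset.univ w z
  have h2 : |dot w z| ^ 2 ≤ (e2 w * e2 z) ^ 2 := by
    rw [sq_abs, mul_pow, e2_sq, e2_sq]
    exact h
  have := abs_nonneg (dot w z)
  have := mul_nonneg (e2_nonneg w) (e2_nonneg z)
  nlinarith

lemma dot_le_e2 (w z : Fin n → ℝ) : dot w z ≤ e2 w * e2 z :=
  (le_abs_self _).trans (abs_dot_le_e2 w z)

lemma e2_le_norm (w : Fin n → ℝ) : e2 w ≤ n * ‖w‖ := by
  have h1 : (∑ i, w i ^ 2) ≤ (∑ i, |w i|) ^ 2 := by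
    have := Finset.sum_sq_le_sq_sum_of_nonneg (s := Finset.univ)
      (f := fun i => |w i|) (fun i _ => abs_nonneg _)
    simpa [sq_abs] using this
  have h2 : (∑ i, |w i|) ≤ n * ‖w‖ := by
    calc (∑ i, |w i|) ≤ ∑ _i : Fin n, ‖w‖ :=
          Finset.sum_le_sum fun i _ => by simpa using norm_le_pi_norm w i
      _ = n * ‖w‖ := by simp [Finset.sum_const]
  have h3 : e2 w ≤ ∑ i, |w i| := by
    rw [e2, show (∑ i, |w i|) = Real.sqrt ((∑ i, |w i|) ^ 2) from
      (Real.sqrt_sq (Finset.sum_nonneg fun i _ => abs_nonneg _)).symm]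
    exact Real.sqrt_le_sqrt h1
  linarith

lemma continuous_e2 : Continuous (e2 : (Fin n → ℝ) → ℝ) :=
  Real.continuous_sqrt.comp (continuous_finset_sum _ fun i _ => (continuous_apply i).pow 2)

lemma FF_boundary (hKopen : IsOpen K) (hKbdd : Bornology.IsBounded K) (hKconv : Convex ℝ K)
    (hKne : K.Nonempty) {x : Fin n → ℝ} (hxK : x ∉ K) : FF K x = ⊤ := by
  classical
  -- separating functional
  obtain ⟨φ, hφ⟩ := geometric_hahn_banach_open_point hKconv hKopen hxK
  set u : Fin n → ℝ := fun i => φ (fun j => if i = j then 1 else 0) with hu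
  have hrep : ∀ g, φ g = dot g u := by
    intro g
    have := (φ : (Fin n → ℝ) →ₗ[ℝ] ℝ).pi_apply_eq_sum_univ g
    simpa [dot, hu] using this
  have hclosure : ∀ y ∈ closure K, dot y u ≤ dot x u := by
    intro y hy
    have hsub : closure K ⊆ {z | φ z ≤ φ x} :=
      closure_minimal (fun a ha => (hφ a ha).le) (isClosed_le φ.continuous continuous_const)
    have := hsub hy
    simpa [hrep] using this
  -- u ≠ 0
  obtain ⟨a, haK⟩ := id hKne
  have hquad : 0 < ∑ i, u i ^ 2 := by
    rcases (Finset.sum_nonneg (fun i _ => sq_nonneg (u i))).lt_or_eq with h | h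
    · exact h
    · exfalso
      have hz : ∀ i, u i = 0 := by
        intro i
        have := (Finset.sum_eq_zero_iff_of_nonneg (fun i _ => sq_nonneg (u i))).1 h.symm i
          (Finset.mem_univ i)
        exact pow_eq_zero_iff (two_ne_zero) |>.1 this
      have h1 : φ a = 0 := by rw [hrep]; simp [dot, hz]
      have h2 : φ x = 0 := by rw [hrep]; simp [dot, hz]
      have := hφ a haK
      rw [h1, h2] at this
      exact lt_irrefl _ this
  set e : ℝ := Real.sqrt (∑ i, u i ^ 2) with he
  have hepos : 0 < e := Real.sqrt_pos.2 hquad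
  set uh : Fin n → ℝ := e⁻¹ • u with huh
  have huh1 : dot uh uh = 1 := by
    rw [huh, dot_smul_left, dot_smul_right, ← mul_assoc]
    have : dot u u = e ^ 2 := by
      rw [he, Real.sq_sqrt hquad.le]; simp [dot, sq]
    rw [this, sq]
    field_simp
  have he2uh : e2 uh = 1 := by
    have : e2 uh ^ 2 = 1 := by
      rw [e2_sq]
      have : dot uh uh = ∑ i, uh i ^ 2 := by simp [dot, sq]
      rw [← this, huh1]
    nlinarith [e2_nonneg uh]
  have hcl' : ∀ y ∈ closure K, dot uh y ≤ dot uh x := by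
    intro y hy
    rw [huh, dot_smul_left, dot_smul_left]
    exact mul_le_mul_of_nonneg_left (by rw [dot_comm u y, dot_comm u x]; exact hclosure y hy)
      (by positivity)
  -- constants
  obtain ⟨M, hM0, hM⟩ := exists_bound hKbdd
  set D : ℝ := n * (M + ‖x‖) + 1 with hD
  have hDpos : 0 < D := by positivity
  have hDy : ∀ y ∈ closure K, e2 (y - x) ≤ D := by
    intro y hy
    have h1 : ∀ i, |(y - x) i| ≤ M + ‖x‖ := by
      intro i
      have := hM y hy i
      have h2 : |x i| ≤ ‖x‖ := by simpa using norm_le_pi_norm x i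
      simp only [Pi.sub_apply]
      calc |y i - x i| ≤ |y i| + |x i| := abs_sub _ _
        _ ≤ M + ‖x‖ := add_le_add this h2
    have h2 : ‖y - x‖ ≤ M + ‖x‖ := (pi_norm_le_iff_of_nonneg (by positivity)).2
      (fun i => by rw [Real.norm_eq_abs]; exact h1 i)
    calc e2 (y - x) ≤ n * ‖y - x‖ := e2_le_norm _
      _ ≤ n * (M + ‖x‖) := mul_le_mul_of_nonneg_left h2 (Nat.cast_nonneg n)
      _ ≤ D := by rw [hD]; linarith
  set δ : ℝ := D⁻¹ with hδ
  have hδpos : 0 < δ := by positivity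
  -- core: small cylinder is in sublevel set
  have hcore : ∀ g : Fin n → ℝ, 0 ≤ dot g uh → e2 (g - dot g uh • uh) < δ → hx K x g ≤ 1 := by
    intro g ht hw
    obtain ⟨ym, hymK, hym, _⟩ := hh_attained hKbdd hKne g
    unfold hx
    rw [hym]
    set t : ℝ := dot g uh
    set w : Fin n → ℝ := g - t • uh with hwdef
    have hgdecomp : g = t • uh + w := by rw [hwdef]; abel
    have h1 : dot g ym - dot g x = dot g (ym - x) := (dot_sub_right g ym x).symm
    have h2 : dot g (ym - x) = t * (dot uh ym - dot uh x) + dot w (ym - x) := by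
      conv_lhs => rw [hgdecomp]
      rw [dot_add_left, dot_smul_left, dot_sub_right]
    have h3 : t * (dot uh ym - dot uh x) ≤ 0 :=
      mul_nonpos_of_nonneg_of_nonpos ht (by linarith [hcl' ym hymK])
    have h4 : dot w (ym - x) ≤ δ * D := by
      calc dot w (ym - x) ≤ e2 w * e2 (ym - x) := dot_le_e2 _ _
        _ ≤ δ * D := mul_le_mul hw.le (hDy ym hymK) (e2_nonneg _) hδpos.le
    have h5 : δ * D = 1 := by rw [hδ]; field_simp
    linarith
  -- the disjoint translated balls
  set ε : ℝ := min (δ/2) 4⁻¹ with hε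
  have hεpos : 0 < ε := by positivity
  have hεδ : 2 * ε ≤ δ := by
    have := min_le_left (δ/2) (4:ℝ)⁻¹
    have : ε ≤ δ/2 := min_le_left _ _
    linarith
  have hε4 : ε ≤ 4⁻¹ := min_le_right _ _
  set C : ℕ → Set (Fin n → ℝ) := fun k => {g | e2 (g - ((k:ℝ)+1) • uh) < ε} with hC
  -- each C k is in the cylinder
  have hCsub : ∀ k, ∀ g ∈ C k, 0 ≤ dot g uh ∧ e2 (g - dot g uh • uh) < δ := by
    intro k g hg
    simp only [hC, Set.mem_setOf_eq] at hg
    set a : Fin n → ℝ := g - ((k:ℝ)+1) • uh with ha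
    set q : ℝ := e2 a with hq
    have hqε : q < ε := hg
    set c : ℝ := ((k:ℝ)+1) - dot g uh with hc
    have hcq : |c| ≤ q := by
      have : dot a uh = dot g uh - ((k:ℝ)+1) := by
        rw [ha]
        have : g - ((k:ℝ)+1) • uh = g + (-(((k:ℝ)+1)) • uh) := by
          rw [neg_smul]; abel
        rw [this, dot_add_left, dot_smul_left, huh1]
        ring
      have h2 : c = - dot a uh := by rw [hc, this]; ring
      rw [h2, abs_neg]
      calc |dot a uh| ≤ e2 a * e2 uh := abs_dot_le_e2 _ _
        _ = q := by rw [he2uh, mul_one, hq]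
    have htpos : 0 ≤ dot g uh := by
      have h1 : dot g uh = ((k:ℝ)+1) - c := by rw [hc]; ring
      have h2 : |c| < 1 := by
        have h4 : (4:ℝ)⁻¹ < 1 := by norm_num
        linarith [hcq, hqε, hε4]
      have h3 : (1:ℝ) ≤ (k:ℝ)+1 := by
        have := Nat.cast_nonneg (α := ℝ) k; linarith
      rw [h1]
      have := abs_lt.1 h2
      linarith
    refine ⟨htpos, ?_⟩
    -- w = a + c • uh
    have hw : g - dot g uh • uh = a + c • uh := by
      rw [ha, hc]
      have : (((k:ℝ)+1) - dot g uh) • uh = ((k:ℝ)+1) • uh - dot g uh • uh := by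
        rw [sub_smul]
      rw [this]; abel
    have hsq : e2 (a + c • uh) ^ 2 ≤ (2*q) ^ 2 := by
      rw [e2_sq]
      simp only [Pi.add_apply, Pi.smul_apply, smul_eq_mul]
      have expand : (∑ i, (a i + c * uh i) ^ 2)
          = (∑ i, a i ^ 2) + 2 * c * (∑ i, a i * uh i) + c ^ 2 * (∑ i, uh i ^ 2) := by
        rw [Finset.mul_sum, Finset.mul_sum, ← Finset.sum_add_distrib, ← Finset.sum_add_distrib]
        refine Finset.sum_congr rfl fun i _ => by ring
      have hsum_a : (∑ i, a i ^ 2) = q ^ 2 := (e2_sq a).symm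
      have hsum_uh : (∑ i, uh i ^ 2) = 1 := by
        have := e2_sq uh; rw [he2uh] at this; simpa using this.symm
      have hdotau : |∑ i, a i * uh i| ≤ q := by
        have : (∑ i, a i * uh i) = dot a uh := rfl
        rw [this]
        calc |dot a uh| ≤ e2 a * e2 uh := abs_dot_le_e2 _ _
          _ = q := by rw [he2uh, hq, mul_one]
      rw [expand, hsum_a, hsum_uh]
      have h1 : 2 * c * (∑ i, a i * uh i) ≤ 2 * q * q := by
        calc 2 * c * (∑ i, a i * uh i) ≤ |2 * c * (∑ i, a i * uh i)| := le_abs_self _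
          _ = 2 * |c| * |∑ i, a i * uh i| := by rw [abs_mul, abs_mul]; simp [abs_of_nonneg]
          _ ≤ 2 * q * q := by
              have h0 := abs_nonneg c
              have h2 := abs_nonneg (∑ i, a i * uh i)
              have := e2_nonneg a
              nlinarith
      have h2 : c ^ 2 ≤ q ^ 2 := by
        rw [← sq_abs c]; exact pow_le_pow_left₀ (abs_nonneg c) hcq 2
      have hfin : q^2 + 2*q*q + q^2 = (2*q)^2 := by ring
      linarith [h1, h2]
    have hfin2 : e2 (a + c • uh) ≤ 2 * q := by
      have h0 := e2_nonneg (a + c • uh)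
      have h2q : (0:ℝ) ≤ 2 * q := by
        have := e2_nonneg a; rw [hq]; linarith
      exact (pow_le_pow_iff_left₀ h0 h2q two_ne_zero).1 hsq
    rw [hw]
    calc e2 (a + c • uh) ≤ 2 * q := hfin2
      _ < 2 * ε := by linarith
      _ ≤ δ := hεδ
  -- disjointness of the C k
  have hbound : ∀ (m : ℕ) (g : Fin n → ℝ), g ∈ C m → |dot g uh - ((m:ℝ)+1)| < ε := by
    intro m g hm
    simp only [hC, Set.mem_setOf_eq] at hm
    have harg : dot (g - ((m:ℝ)+1) • uh) uh = dot g uh - ((m:ℝ)+1) := by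
      have h0 : g - ((m:ℝ)+1) • uh = g + (-(((m:ℝ)+1)) • uh) := by rw [neg_smul]; abel
      rw [h0, dot_add_left, dot_smul_left, huh1]; ring
    rw [← harg]
    calc |dot (g - ((m:ℝ)+1) • uh) uh| ≤ e2 (g - ((m:ℝ)+1) • uh) * e2 uh := abs_dot_le_e2 _ _
      _ = e2 (g - ((m:ℝ)+1) • uh) := by rw [he2uh, mul_one]
      _ < ε := hm
  have hdisj : Pairwise (Function.onFun Disjoint C) := by
    intro k l hkl
    rw [Function.onFun, Set.disjoint_left]
    intro g hgk hgl
    have h1 := hbound k g hgk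
    have h2 := hbound l g hgl
    have hge : (1:ℝ) ≤ |((k:ℝ)+1) - ((l:ℝ)+1)| := by
      have : ((k:ℝ)+1) - ((l:ℝ)+1) = (k:ℝ) - (l:ℝ) := by ring
      rw [this]
      rcases lt_or_gt_of_ne hkl with h | h
      · rw [abs_sub_comm, abs_of_nonneg (by
          have : (k:ℝ) ≤ (l:ℝ) := by exact_mod_cast h.le
          linarith)]
        have : (k:ℝ) + 1 ≤ (l:ℝ) := by exact_mod_cast Nat.succ_le_of_lt h
        linarith
      · rw [abs_of_nonneg (by
          have : (l:ℝ) ≤ (k:ℝ) := by exact_mod_cast h.le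
          linarith)]
        have : (l:ℝ) + 1 ≤ (k:ℝ) := by exact_mod_cast Nat.succ_le_of_lt h
        linarith
    have htri : |((k:ℝ)+1) - ((l:ℝ)+1)| < 2 * ε := by
      calc |((k:ℝ)+1) - ((l:ℝ)+1)|
          = |(dot g uh - ((l:ℝ)+1)) - (dot g uh - ((k:ℝ)+1))| := by ring_nf
        _ ≤ |dot g uh - ((l:ℝ)+1)| + |dot g uh - ((k:ℝ)+1)| := abs_sub _ _
        _ < 2 * ε := by linarith
    have : 2 * ε ≤ 2⁻¹ := by linarith [hε4]
    linarith
  -- measurability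
  have hCcont : ∀ v : Fin n → ℝ, Continuous (fun g : Fin n → ℝ => e2 (g - v)) := by
    intro v
    exact continuous_e2.comp (continuous_id.sub continuous_const)
  have hCmeas : ∀ k, MeasurableSet (C k) := by
    intro k
    exact (isOpen_lt (hCcont _) continuous_const).measurableSet
  -- translation invariance
  have hCvol : ∀ k, volume (C k) = volume (C 0) := by
    intro k
    have hset : C k = (fun g => ((-(k:ℝ)) • uh) + g) ⁻¹' (C 0) := by
      ext g
      simp only [hC, Set.mem_setOf_eq, Set.mem_preimage, Nat.cast_zero, zero_add]
      have harg : ((-(k:ℝ)) • uh + g) - (1:ℝ) • uh = g - ((k:ℝ)+1) • uh := by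
        rw [add_smul, one_smul, neg_smul]
        abel
      rw [harg]
    rw [hset, measure_preimage_add]
  -- positivity of volume of C 0
  have hC0pos : 0 < volume (C 0) := by
    have hopen : IsOpen (C 0) := isOpen_lt (hCcont _) continuous_const
    have hne : (C 0).Nonempty := by
      refine ⟨uh, ?_⟩
      simp only [hC, Set.mem_setOf_eq, Nat.cast_zero, zero_add, one_smul, sub_self]
      have : e2 (0 : Fin n → ℝ) = 0 := by simp [e2]
      rw [this]
      exact hεpos
    exact hopen.measure_pos volume hne
  -- conclusion
  have hUvol : volume (⋃ k, C k) = ⊤ := by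
    rw [measure_iUnion hdisj hCmeas]
    calc (∑' k, volume (C k)) = ∑' _k : ℕ, volume (C 0) := by
          exact tsum_congr fun k => hCvol k
      _ = ⊤ := ENNReal.tsum_const_eq_top_of_ne_zero hC0pos.ne'
  have hsubU : ∀ g ∈ ⋃ k, C k, hx K x g ≤ 1 := by
    intro g hg
    obtain ⟨k, hk⟩ := Set.mem_iUnion.1 hg
    exact hcore g (hCsub k g hk).1 (hCsub k g hk).2
  have hlow : ENNReal.ofReal (Real.exp (-1)) * volume (⋃ k, C k) ≤ FF K x := by
    rw [← setLIntegral_const (⋃ k, C k) (ENNReal.ofReal (Real.exp (-1)))]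
    have hmeas : Measurable fun g : Fin n → ℝ => ENNReal.ofReal (Real.exp (-(hx K x g))) :=
      (ENNReal.continuous_ofReal.comp
        (Real.continuous_exp.comp (hx_continuous hKbdd hKne x).neg)).measurable
    refine le_trans (setLIntegral_mono hmeas ?_) (setLIntegral_le_lintegral _ _)
    intro g hg
    exact ENNReal.ofReal_le_ofReal (Real.exp_le_exp.2 (by linarith [hsubU g hg]))
  rw [hUvol, ENNReal.mul_top (by simp [Real.exp_pos])] at hlow
  exact top_le_iff.1 hlow

lemma exp_sq_facts (A B : ℝ) : Real.exp ((A+B)/2) = Real.exp (A/2) * Real.exp (B/2)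
    ∧ Real.exp A = Real.exp (A/2) * Real.exp (A/2) := by
  constructor
  · rw [← Real.exp_add]; ring_nf
  · rw [← Real.exp_add]; ring_nf

lemma exp_mid_le (A B : ℝ) : 2 * Real.exp ((A+B)/2) ≤ Real.exp A + Real.exp B := by
  obtain ⟨h1, h2⟩ := exp_sq_facts A B
  obtain ⟨-, h3⟩ := exp_sq_facts B A
  rw [h1, h2, h3]
  nlinarith [sq_nonneg (Real.exp (A/2) - Real.exp (B/2))]

lemma exp_mid_lt {A B : ℝ} (h : A ≠ B) : 2 * Real.exp ((A+B)/2) < Real.exp A + Real.exp B := by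
  have hne : Real.exp (A/2) ≠ Real.exp (B/2) := by
    intro hc
    exact h (by have := Real.exp_eq_exp.1 hc; linarith)
  obtain ⟨h1, h2⟩ := exp_sq_facts A B
  obtain ⟨-, h3⟩ := exp_sq_facts B A
  rw [h1, h2, h3]
  have hpos : 0 < (Real.exp (A/2) - Real.exp (B/2))^2 := by
    have := sub_ne_zero.2 hne
    positivity
  nlinarith [hpos]

lemma FF_strict_mid (hKbdd : Bornology.IsBounded K) (hKne : K.Nonempty)
    {x x' : Fin n → ℝ} (hne : x ≠ x')
    (hfx : FF K x ≠ ⊤) (hfx' : FF K x' ≠ ⊤) :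
    2 * FF K ((1/2 : ℝ) • x + (1/2 : ℝ) • x') < FF K x + FF K x' := by
  classical
  set z : Fin n → ℝ := (1/2 : ℝ) • x + (1/2 : ℝ) • x' with hz
  have hmeas : ∀ w : Fin n → ℝ, Measurable fun g : Fin n → ℝ =>
      ENNReal.ofReal (Real.exp (-(hx K w g))) := fun w =>
    (ENNReal.continuous_ofReal.comp
      (Real.continuous_exp.comp (hx_continuous hKbdd hKne w).neg)).measurable
  have hmid : ∀ g, -(hx K z g) = ((-(hx K x g)) + (-(hx K x' g))) / 2 := by
    intro g
    simp only [hx, hz]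
    have : dot g ((1/2 : ℝ) • x + (1/2 : ℝ) • x') = (dot g x + dot g x') / 2 := by
      simp only [dot, Pi.add_apply, Pi.smul_apply, smul_eq_mul]
      rw [← Finset.sum_add_distrib, Finset.sum_div]
      exact Finset.sum_congr rfl fun i _ => by ring
    rw [this]
    ring
  set f : (Fin n → ℝ) → ℝ≥0∞ := fun g => 2 * ENNReal.ofReal (Real.exp (-(hx K z g))) with hf
  set F2 : (Fin n → ℝ) → ℝ≥0∞ := fun g =>
    ENNReal.ofReal (Real.exp (-(hx K x g))) + ENNReal.ofReal (Real.exp (-(hx K x' g))) with hF2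
  have hrwf : ∀ g, f g = ENNReal.ofReal (2 * Real.exp (((-(hx K x g)) + (-(hx K x' g))) / 2)) := by
    intro g
    rw [hf]
    simp only []
    rw [hmid g, ENNReal.ofReal_mul (by norm_num : (0:ℝ) ≤ 2)]
    norm_num
  have hrwF2 : ∀ g, F2 g = ENNReal.ofReal (Real.exp (-(hx K x g)) + Real.exp (-(hx K x' g))) := by
    intro g
    rw [hF2]
    simp only []
    rw [ENNReal.ofReal_add (Real.exp_pos _).le (Real.exp_pos _).le]
  have hptle : ∀ g, f g ≤ F2 g := by
    intro g
    rw [hrwf g, hrwF2 g]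
    exact ENNReal.ofReal_le_ofReal (exp_mid_le _ _)
  have hptlt : ∀ g, dot g (x - x') ≠ 0 → f g < F2 g := by
    intro g hg
    rw [hrwf g, hrwF2 g]
    refine (ENNReal.ofReal_lt_ofReal_iff (by positivity)).2 ?_
    refine exp_mid_lt ?_
    intro hAB
    apply hg
    have h1 : hx K x g = hx K x' g := by linarith
    simp only [hx] at h1
    rw [dot_sub_right]
    linarith
  -- the critical hyperplane is null
  have hnull : volume {g : Fin n → ℝ | dot g (x - x') = 0} = 0 := by
    set c : Fin n → ℝ := x - x' with hc
    have hcne : c ≠ 0 := sub_ne_zero.2 hne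
    set ℓ : (Fin n → ℝ) →ₗ[ℝ] ℝ :=
      { toFun := fun g => dot g c
        map_add' := fun a b => dot_add_left a b c
        map_smul' := fun m a => by simp [dot_smul_left] } with hℓ
    have hker : {g : Fin n → ℝ | dot g c = 0} = (LinearMap.ker ℓ : Set (Fin n → ℝ)) := by
      ext g; simp [hℓ, LinearMap.mem_ker]
    rw [hker]
    refine Measure.addHaar_submodule volume _ (fun htop => hcne ?_)
    have hmem : c ∈ LinearMap.ker ℓ := by rw [htop]; exact Submodule.mem_top
    have h0 : dot c c = 0 := hmem
    have hz : ∀ i, c i = 0 := by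
      intro i
      have hsum : (∑ i, c i ^ 2) = 0 := by
        have hdc : dot c c = ∑ i, c i ^ 2 := by simp [dot, sq]
        rw [← hdc, h0]
      have := (Finset.sum_eq_zero_iff_of_nonneg (fun i _ => sq_nonneg (c i))).1 hsum i
        (Finset.mem_univ i)
      exact pow_eq_zero_iff two_ne_zero |>.1 this
    funext i
    exact hz i
  -- strict inequality of integrals
  have hF2int : (∫⁻ g, F2 g) = FF K x + FF K x' := by
    rw [hF2]
    exact lintegral_add_left (hmeas x) _
  have hfint : (∫⁻ g, f g) = 2 * FF K z := by
    rw [hf]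
    exact lintegral_const_mul 2 (hmeas z)
  have hfi : (∫⁻ g, f g) ≠ ⊤ := by
    refine ne_top_of_le_ne_top ?_ (lintegral_mono hptle)
    rw [hF2int]
    exact ENNReal.add_ne_top.2 ⟨hfx, hfx'⟩
  have hμs : volume {g : Fin n → ℝ | dot g (x - x') ≠ 0} ≠ 0 := by
    intro h0
    have hcompl : {g : Fin n → ℝ | dot g (x - x') ≠ 0}ᶜ = {g | dot g (x - x') = 0} := by
      ext g; simp
    have huniv : volume (univ : Set (Fin n → ℝ)) = 0 := by
      have hsub : (univ : Set (Fin n → ℝ)) ⊆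
          {g | dot g (x - x') ≠ 0} ∪ {g | dot g (x - x') ≠ 0}ᶜ := by
        intro g _; by_cases hg : dot g (x - x') = 0
        · right; simp [hg]
        · left; exact hg
      refine le_antisymm ?_ (zero_le)
      calc volume univ ≤ volume ({g : Fin n → ℝ | dot g (x - x') ≠ 0} ∪
            {g | dot g (x - x') ≠ 0}ᶜ) := measure_mono hsub
        _ ≤ volume {g : Fin n → ℝ | dot g (x - x') ≠ 0} +
            volume ({g : Fin n → ℝ | dot g (x - x') ≠ 0}ᶜ) := measure_union_le _ _
        _ = 0 := by rw [h0, hcompl, hnull]; simp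
    exact (isOpen_univ.measure_pos volume ⟨0, trivial⟩).ne' huniv
  have hstrict : (∫⁻ g, f g) < ∫⁻ g, F2 g := by
    refine lintegral_strict_mono_of_ae_le_of_ae_lt_on
      ((hmeas x).add (hmeas x')).aemeasurable hfi
      (Filter.Eventually.of_forall hptle) hμs
      (Filter.Eventually.of_forall fun g hg => hptlt g hg)
  rw [hfint, hF2int] at hstrict
  exact hstrict

lemma FF_lt_top (hKopen : IsOpen K) (hKbdd : Bornology.IsBounded K) (hKne : K.Nonempty)
    {x : Fin n → ℝ} (hxK : x ∈ K) : FF K x < ⊤ := by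
  rw [FF_eq hKbdd hKne (subset_closure hxK)]
  exact ENNReal.mul_lt_top (cgam_lt_top n) (VV_lt_top hKbdd hKne hxK hKopen)

lemma exists_min (hKopen : IsOpen K) (hKbdd : Bornology.IsBounded K) (hKconv : Convex ℝ K)
    (hKne : K.Nonempty) :
    ∃ xs ∈ K, ∀ y ∈ K, FF K xs ≤ FF K y := by
  classical
  obtain ⟨x₀, hx₀⟩ := id hKne
  set m : ℝ≥0∞ := ⨅ (x : Fin n → ℝ) (_ : x ∈ closure K), FF K x with hm
  have hm_le : ∀ y ∈ closure K, m ≤ FF K y := fun y hy => iInf₂_le y hy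
  have hm_top : m < ⊤ :=
    lt_of_le_of_lt (hm_le x₀ (subset_closure hx₀)) (FF_lt_top hKopen hKbdd hKne hx₀)
  -- minimizing sequence
  have hseq : ∀ k : ℕ, ∃ x ∈ closure K, FF K x ≤ m + (2⁻¹ : ℝ≥0∞) ^ k := by
    intro k
    by_contra hcon
    push_neg at hcon
    have : m + (2⁻¹ : ℝ≥0∞) ^ k ≤ m := le_iInf₂ fun x hxm => (hcon x hxm).le
    have hpow : (0:ℝ≥0∞) < (2⁻¹ : ℝ≥0∞) ^ k := by
      apply ENNReal.pow_pos
      norm_num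
    have hlt := ENNReal.lt_add_right hm_top.ne hpow.ne'
    exact absurd (lt_of_lt_of_le hlt this) (lt_irrefl m)
  choose xk hxkmem hxkle using hseq
  obtain ⟨xs, hxsmem, φ, hφmono, hφtend⟩ := (hcompact hKbdd).tendsto_subseq hxkmem
  -- the sequence of values tends to m
  have htendvals : Tendsto (fun k => FF K (xk k)) atTop (𝓝 m) := by
    have hupper : Tendsto (fun k : ℕ => m + (2⁻¹ : ℝ≥0∞) ^ k) atTop (𝓝 m) := by
      have h0 : Tendsto (fun k : ℕ => (2⁻¹ : ℝ≥0∞) ^ k) atTop (𝓝 0) :=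
        ENNReal.tendsto_pow_atTop_nhds_zero_of_lt_one (by norm_num)
      simpa using tendsto_const_nhds.add h0
    exact tendsto_of_tendsto_of_tendsto_of_le_of_le
      (tendsto_const_nhds) hupper (fun k => hm_le _ (hxkmem k)) (fun k => hxkle k)
  have htendsub : Tendsto (fun k => FF K (xk (φ k))) atTop (𝓝 m) :=
    htendvals.comp hφmono.tendsto_atTop
  -- Fatou
  have hFat : FF K xs ≤ m := by
    have hpt : ∀ g : Fin n → ℝ,
        ENNReal.ofReal (Real.exp (-(hx K xs g)))
          = liminf (fun k => ENNReal.ofReal (Real.exp (-(hx K (xk (φ k)) g)))) atTop := by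
      intro g
      have htd : Tendsto (fun k => ENNReal.ofReal (Real.exp (-(hx K (xk (φ k)) g)))) atTop
          (𝓝 (ENNReal.ofReal (Real.exp (-(hx K xs g))))) := by
        have h1 : Tendsto (fun k => dot g (xk (φ k))) atTop (𝓝 (dot g xs)) :=
          ((continuous_dot_right g).tendsto xs).comp hφtend
        have h2 : Tendsto (fun k => hx K (xk (φ k)) g) atTop (𝓝 (hx K xs g)) := by
          simp only [hx]
          exact tendsto_const_nhds.sub h1
        exact (ENNReal.continuous_ofReal.tendsto _).comp
          ((Real.continuous_exp.tendsto _).comp h2.neg)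
      exact htd.liminf_eq.symm
    calc FF K xs
        = ∫⁻ g, liminf (fun k => ENNReal.ofReal (Real.exp (-(hx K (xk (φ k)) g)))) atTop := by
          rw [FF]; exact lintegral_congr fun g => hpt g
      _ ≤ liminf (fun k => FF K (xk (φ k))) atTop := lintegral_liminf_le fun k =>
          (ENNReal.continuous_ofReal.comp
            (Real.continuous_exp.comp (hx_continuous hKbdd hKne _).neg)).measurable
      _ = m := htendsub.liminf_eq
  have hxsK : xs ∈ K := by
    by_contra hc
    rw [FF_boundary hKopen hKbdd hKconv hKne hc] at hFat
    exact absurd (lt_of_le_of_lt hFat hm_top) (lt_irrefl _)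
  exact ⟨xs, hxsK, fun y hy => hFat.trans (hm_le y (subset_closure hy))⟩

end Stmt17

/-- let `K ⊂ ℝⁿ` be a nonempty open bounded convex set.  There exists
a unique point `x ∈ K` minimizing the volume of the dual body
`K^x = {f : ⟨f, y - x⟩ > -1 ∀ y ∈ closure K}` (the Santaló point of `K`). -/
theorem stmt17 (n : ℕ) (K : Set (Fin n → ℝ))
    (hKopen : IsOpen K) (hKbdd : Bornology.IsBounded K) (hKconv : Convex ℝ K)
    (hKne : K.Nonempty)
    (dual : (Fin n → ℝ) → Set (Fin n → ℝ))
    (hdual : ∀ x, dual x = {f | ∀ y ∈ closure K, -1 < ∑ i, f i * (y i - x i)}) :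
    ∃! x : Fin n → ℝ, x ∈ K ∧ ∀ y ∈ K, volume (dual x) ≤ volume (dual y) := by
  obtain ⟨xs, hxsK, hxsmin⟩ := Stmt17.exists_min hKopen hKbdd hKconv hKne
  have hdv : ∀ x, volume (dual x) = Stmt17.VV K x := fun x =>
    Stmt17.dual_eq hKbdd hKne x dual hdual
  have hiff : ∀ x ∈ K, ∀ y ∈ K,
      (Stmt17.FF K x ≤ Stmt17.FF K y ↔ Stmt17.VV K x ≤ Stmt17.VV K y) := by
    intro x hxm y hym
    rw [Stmt17.FF_eq hKbdd hKne (subset_closure hxm),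
      Stmt17.FF_eq hKbdd hKne (subset_closure hym)]
    exact ENNReal.mul_le_mul_iff_right (Stmt17.cgam_pos n).ne' (Stmt17.cgam_lt_top n).ne
  refine ⟨xs, ⟨hxsK, fun y hy => ?_⟩, ?_⟩
  · rw [hdv xs, hdv y]
    exact (hiff xs hxsK y hy).1 (hxsmin y hy)
  · rintro x' ⟨hx'K, hx'min⟩
    by_contra hneq
    have hFxs := Stmt17.FF_lt_top hKopen hKbdd hKne hxsK
    have hFx' := Stmt17.FF_lt_top hKopen hKbdd hKne hx'K
    have hmid := Stmt17.FF_strict_mid hKbdd hKne hneq hFx'.ne hFxs.ne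
    have hzK : ((1/2 : ℝ) • x' + (1/2 : ℝ) • xs) ∈ K :=
      hKconv hx'K hxsK (by norm_num) (by norm_num) (by norm_num)
    have h1 : Stmt17.FF K xs ≤ Stmt17.FF K ((1/2 : ℝ) • x' + (1/2 : ℝ) • xs) :=
      hxsmin _ hzK
    have h2 : Stmt17.FF K x' ≤ Stmt17.FF K xs := by
      refine (hiff x' hx'K xs hxsK).2 ?_
      rw [← hdv x', ← hdv xs]
      exact hx'min xs hxsK
    have hcontra : 2 * Stmt17.FF K ((1/2 : ℝ) • x' + (1/2 : ℝ) • xs)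
        < 2 * Stmt17.FF K ((1/2 : ℝ) • x' + (1/2 : ℝ) • xs) := by
      calc 2 * Stmt17.FF K ((1/2 : ℝ) • x' + (1/2 : ℝ) • xs)
          < Stmt17.FF K x' + Stmt17.FF K xs := hmid
        _ ≤ Stmt17.FF K xs + Stmt17.FF K xs := add_le_add_left h2 _
        _ = 2 * Stmt17.FF K xs := (two_mul _).symm
        _ ≤ 2 * Stmt17.FF K ((1/2 : ℝ) • x' + (1/2 : ℝ) • xs) := mul_le_mul_right h1 2
    exact absurd hcontra (lt_irrefl _)
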